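/- Let J(t) be a differentiable family of 4×4 matrices of the form J_{(a(t),b(t),c(t))} = [[aE, bE+cI],[bE−cI, −aE]] with a²+b²+c² = 1, and let J' and J̇ denote derivatives in two independent parameters. Then the matrix equation J' = J·J̇ holds if and only if the system a' = c·ḃ − b·ċ, b' = a·ċ − c·ȧ, c' = b·ȧ − a·ḃ holds. -/

import Mathlib

/-- The matrix `J_{(a,b,c)} = [[aE, bE+cI],[bE−cI, −aE]]` where `E = [[0,1],[−1,0]]`. -/
def Jabc (a b c : ℝ) : Matrix (Fin 4) (Fin 4) ℝ :=
  !![0, a, c, b;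
     -a, 0, -b, c;
     -c, b, 0, -a;
     -b, -c, a, 0]

theorem key (a b c : ℝ × ℝ → ℝ)
    (ha : Differentiable ℝ a) (hb : Differentiable ℝ b) (hc : Differentiable ℝ c)
    (hunit : ∀ p, a p ^ 2 + b p ^ 2 + c p ^ 2 = 1) (p : ℝ × ℝ) (v : ℝ × ℝ) :
    a p * fderiv ℝ a p v + b p * fderiv ℝ b p v + c p * fderiv ℝ c p v = 0 := by
  have h1 := (((ha p).hasFDerivAt.mul (ha p).hasFDerivAt).add
      (((hb p).hasFDerivAt.mul (hb p).hasFDerivAt).add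
        ((hc p).hasFDerivAt.mul (hc p).hasFDerivAt)))
  have hconst : (fun x => a x * a x + (b x * b x + c x * c x)) = fun _ : ℝ × ℝ => (1:ℝ) := by
    funext q
    have := hunit q
    ring_nf; ring_nf at this; linarith
  change HasFDerivAt (fun x => a x * a x + (b x * b x + c x * c x)) _ p at h1
  rw [hconst] at h1
  have h4 := congrArg (fun L => L v) (h1.unique (hasFDerivAt_const 1 p))
  simp at h4
  linarith

theorem stmt_13 (a b c : ℝ × ℝ → ℝ)
    (ha : Differentiable ℝ a) (hb : Differentiable ℝ b) (hc : Differentiable ℝ c)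
    (hunit : ∀ p, a p ^ 2 + b p ^ 2 + c p ^ 2 = 1) (p : ℝ × ℝ) :
    letI J : ℝ × ℝ → Matrix (Fin 4) (Fin 4) ℝ := fun q => Jabc (a q) (b q) (c q)
    letI J' : Matrix (Fin 4) (Fin 4) ℝ :=
      Matrix.of fun i j => fderiv ℝ (fun q => J q i j) p (1, 0)
    letI Jdot : Matrix (Fin 4) (Fin 4) ℝ :=
      Matrix.of fun i j => fderiv ℝ (fun q => J q i j) p (0, 1)
    (J' = J p * Jdot) ↔
      (fderiv ℝ a p (1, 0) = c p * fderiv ℝ b p (0, 1) - b p * fderiv ℝ c p (0, 1) ∧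
       fderiv ℝ b p (1, 0) = a p * fderiv ℝ c p (0, 1) - c p * fderiv ℝ a p (0, 1) ∧
       fderiv ℝ c p (1, 0) = b p * fderiv ℝ a p (0, 1) - a p * fderiv ℝ b p (0, 1)) := by
  have k1 := key a b c ha hb hc hunit p (1, 0)
  have k2 := key a b c ha hb hc hunit p (0, 1)
  rw [← Matrix.ext_iff]
  constructor
  · intro h
    have h01 := h 0 1
    have h02 := h 0 2
    have h03 := h 0 3
    simp [Jabc, Matrix.mul_apply, Fin.sum_univ_four, fderiv_neg] at h01 h02 h03
    refine ⟨by linarith, by linarith, by linarith⟩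
  · rintro ⟨h1, h2, h3⟩ i j
    fin_cases i <;> fin_cases j <;>
      simp [Jabc, Matrix.mul_apply, Fin.sum_univ_four, fderiv_neg] <;>
      linarith
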